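/- Let M, η, g, t > 0 and define, for J > 0, f(t, J) = M² (1 + 2 J M t η) / (16 η g² J² · D(t, J)) where D(t, J) = a(t, J) e^{−M t} + 4(1 + 4Jη) e^{−M t/2} + c(t, J), a(t, J) = −(1 + 2ηJ(4 + M t)), and c(t, J) = (M t − 3) + 2ηJ(M t − 4). Set h(x) = −(4 + x)e^{−x} + 8 e^{−x/2} + x − 4. Then lim_{J→∞} J² · f(t, J) = M³ t / (16 η g² h(M t)), and furthermore lim_{t→0⁺} t³ · M³ t/(16 η g² h(M t)) = 3/(η M g²). -/

import Mathlib

open Filter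

section AuxForNoiselessError
open Filter Real

private noncomputable def Faux (a1 b1 a2 a3 b3 : ℝ) (x : ℝ) : ℝ :=
  (a1 + b1*x)*Real.exp (-x) + a2*Real.exp (-x/2) + (a3 + b3*x)

private lemma Faux_cont (a1 b1 a2 a3 b3 : ℝ) : Continuous (Faux a1 b1 a2 a3 b3) := by
  unfold Faux; fun_prop

private lemma Faux_zero (a1 b1 a2 a3 b3 : ℝ) : Faux a1 b1 a2 a3 b3 0 = a1 + a2 + a3 := by
  simp [Faux]

private lemma Faux_deriv (a1 b1 a2 a3 b3 x : ℝ) :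
    HasDerivAt (Faux a1 b1 a2 a3 b3) (Faux (b1 - a1) (-b1) (-a2/2) b3 0 x) x := by
  have e1 : HasDerivAt (fun x : ℝ => Real.exp (-x)) (-Real.exp (-x)) x := by
    simpa [Function.comp_def] using (Real.hasDerivAt_exp (-x)).comp x ((hasDerivAt_id x).neg)
  have e2 : HasDerivAt (fun x : ℝ => Real.exp (-x/2)) (Real.exp (-x/2) * (-1/2)) x := by
    have h1 : HasDerivAt (fun x : ℝ => -x/2) (-1/2) x := by
      simpa using ((hasDerivAt_id x).neg.div_const 2)
    simpa [Function.comp_def] using (Real.hasDerivAt_exp (-x/2)).comp x h1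
  have l1 : HasDerivAt (fun x : ℝ => a1 + b1*x) b1 x := by
    exact (((hasDerivAt_id' x).const_mul b1).const_add a1).congr_deriv (mul_one b1)
  have l2 : HasDerivAt (fun x : ℝ => a3 + b3*x) b3 x := by
    exact (((hasDerivAt_id' x).const_mul b3).const_add a3).congr_deriv (mul_one b3)
  have h2 := ((l1.mul e1).add (e2.const_mul a2)).add l2
  have hval : Faux (b1 - a1) (-b1) (-a2/2) b3 0 x
      = b1 * Real.exp (-x) + (a1 + b1 * x) * -Real.exp (-x)
        + a2 * (Real.exp (-x/2) * (-1/2)) + b3 := by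
    simp only [Faux]; ring
  rw [hval]
  exact h2

private lemma F0_lim :
    Filter.Tendsto (fun x : ℝ => Faux (-4) (-1) 8 (-4) 1 x / x^4)
      (nhdsWithin 0 (Set.Ioi 0)) (nhds (1/48)) := by
  have ev_pos : ∀ᶠ x : ℝ in nhdsWithin 0 (Set.Ioi 0), (0:ℝ) < x :=
    self_mem_nhdsWithin
  have tendF : ∀ a1 b1 a2 a3 b3 : ℝ, a1 + a2 + a3 = 0 →
      Filter.Tendsto (Faux a1 b1 a2 a3 b3) (nhdsWithin 0 (Set.Ioi 0)) (nhds 0) := by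
    intro a1 b1 a2 a3 b3 hz
    have := ((Faux_cont a1 b1 a2 a3 b3).tendsto 0).mono_left
      (nhdsWithin_le_nhds (s := Set.Ioi 0))
    rwa [Faux_zero, hz] at this
  have T4 : Filter.Tendsto (fun x : ℝ => Faux 0 (-1) (1/2) 0 0 x / 24)
      (nhdsWithin 0 (Set.Ioi 0)) (nhds (1/48)) := by
    have h := (((Faux_cont 0 (-1) (1/2) 0 0).tendsto 0).mono_left
      (nhdsWithin_le_nhds (s := Set.Ioi 0))).div_const 24
    rw [Faux_zero] at h
    norm_num at h
    exact h
  have T3 : Filter.Tendsto (fun x : ℝ => Faux 1 1 (-1) 0 0 x / (24*x))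
      (nhdsWithin 0 (Set.Ioi 0)) (nhds (1/48)) := by
    apply HasDerivAt.lhopital_zero_nhdsGT
      (f' := fun x => Faux 0 (-1) (1/2) 0 0 x) (g' := fun _ => (24:ℝ))
    · refine Eventually.of_forall fun x => ?_
      have := Faux_deriv 1 1 (-1) 0 0 x
      norm_num at this ⊢
      exact this
    · exact Eventually.of_forall fun x => by
        simpa using (hasDerivAt_id x).const_mul (24:ℝ)
    · exact Eventually.of_forall fun x => by norm_num
    · exact tendF 1 1 (-1) 0 0 (by norm_num)
    · have hc : Continuous (fun x : ℝ => 24*x) := by fun_prop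
      simpa using (hc.tendsto 0).mono_left (nhdsWithin_le_nhds (s := Set.Ioi 0))
    · exact T4
  have T2 : Filter.Tendsto (fun x : ℝ => Faux (-2) (-1) 2 0 0 x / (12*x^2))
      (nhdsWithin 0 (Set.Ioi 0)) (nhds (1/48)) := by
    apply HasDerivAt.lhopital_zero_nhdsGT
      (f' := fun x => Faux 1 1 (-1) 0 0 x) (g' := fun x => 24*x)
    · refine Eventually.of_forall fun x => ?_
      have := Faux_deriv (-2) (-1) 2 0 0 x
      norm_num at this ⊢
      exact this
    · refine Eventually.of_forall fun x => ?_
      have := (hasDerivAt_pow 2 x).const_mul (12:ℝ)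
      norm_num at this
      first
      | exact this
      | exact this.congr_deriv (by ring)
    · exact ev_pos.mono fun x hx => by positivity
    · exact tendF (-2) (-1) 2 0 0 (by norm_num)
    · have hc : Continuous (fun x : ℝ => 12*x^2) := by fun_prop
      simpa using (hc.tendsto 0).mono_left (nhdsWithin_le_nhds (s := Set.Ioi 0))
    · exact T3
  have T1 : Filter.Tendsto (fun x : ℝ => Faux 3 1 (-4) 1 0 x / (4*x^3))
      (nhdsWithin 0 (Set.Ioi 0)) (nhds (1/48)) := by
    apply HasDerivAt.lhopital_zero_nhdsGT
      (f' := fun x => Faux (-2) (-1) 2 0 0 x) (g' := fun x => 12*x^2)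
    · refine Eventually.of_forall fun x => ?_
      have := Faux_deriv 3 1 (-4) 1 0 x
      norm_num at this ⊢
      exact this
    · refine Eventually.of_forall fun x => ?_
      have := (hasDerivAt_pow 3 x).const_mul (4:ℝ)
      norm_num at this
      first
      | exact this
      | exact this.congr_deriv (by ring)
    · exact ev_pos.mono fun x hx => by positivity
    · exact tendF 3 1 (-4) 1 0 (by norm_num)
    · have hc : Continuous (fun x : ℝ => 4*x^3) := by fun_prop
      simpa using (hc.tendsto 0).mono_left (nhdsWithin_le_nhds (s := Set.Ioi 0))
    · exact T2
  apply HasDerivAt.lhopital_zero_nhdsGT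
    (f' := fun x => Faux 3 1 (-4) 1 0 x) (g' := fun x => 4*x^3)
  · refine Eventually.of_forall fun x => ?_
    have := Faux_deriv (-4) (-1) 8 (-4) 1 x
    norm_num at this ⊢
    exact this
  · refine Eventually.of_forall fun x => ?_
    have := hasDerivAt_pow 4 x
    norm_num at this
    first
    | exact this
    | (convert this using 1; ring)
  · exact ev_pos.mono fun x hx => by positivity
  · exact tendF (-4) (-1) 8 (-4) 1 (by norm_num)
  · have hc : Continuous (fun x : ℝ => x^4) := by fun_prop
    simpa using (hc.tendsto 0).mono_left (nhdsWithin_le_nhds (s := Set.Ioi 0))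
  · exact T1

private lemma key_pos (y : ℝ) (hy : 0 < y) :
    0 < y*(Real.exp y + 1) - 2*(Real.exp y - 1) := by
  have mono : StrictMonoOn (fun y : ℝ => y*(Real.exp y + 1) - 2*(Real.exp y - 1)) (Set.Ici 0) := by
    apply strictMonoOn_of_deriv_pos (convex_Ici 0)
    · fun_prop
    · intro z hz
      rw [interior_Ici] at hz
      have hd : HasDerivAt (fun y : ℝ => y*(Real.exp y + 1) - 2*(Real.exp y - 1))
          (1 - (1-z)*Real.exp z) z := by
        have h2 := ((hasDerivAt_id z).mul ((Real.hasDerivAt_exp z).add_const 1)).sub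
          (((Real.hasDerivAt_exp z).sub_const 1).const_mul 2)
        have hval : 1 - (1-z)*Real.exp z
            = 1 * (Real.exp z + 1) + id z * Real.exp z - 2 * Real.exp z := by
          simp [id]; ring
        rw [hval]
        exact h2
      rw [hd.deriv]
      have h1 : 1 - z < Real.exp (-z) := by
        have := Real.add_one_lt_exp (x := -z) (neg_ne_zero.2 (Set.mem_Ioi.mp hz).ne')
        linarith
      have h2 : (1 - z) * Real.exp z < Real.exp (-z) * Real.exp z :=
        mul_lt_mul_of_pos_right h1 (Real.exp_pos z)
      rw [← Real.exp_add] at h2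
      simp at h2
      linarith
  have := mono Set.self_mem_Ici (Set.mem_Ici.2 hy.le) hy
  simpa using this

private lemma aux_pos (x : ℝ) (hx : 0 < x) :
    0 < -(4+x)*Real.exp (-x) + 8*Real.exp (-x/2) + x - 4 := by
  set s := Real.exp (-x/2) with hs
  have hsp : 0 < s := Real.exp_pos _
  have hs1 : s < 1 := by
    rw [hs]
    apply Real.exp_lt_one_iff.mpr  -- guess name
    linarith
  have hE : Real.exp (-x) = s * s := by
    rw [hs, ← Real.exp_add]; ring_nf
  have hsE : s * Real.exp (x/2) = 1 := by
    have hz : -x/2 + x/2 = 0 := by ring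
    rw [hs, ← Real.exp_add, hz, Real.exp_zero]
  have hK := key_pos (x/2) (by positivity)
  have h3 : 0 < s * (x/2*(Real.exp (x/2)+1) - 2*(Real.exp (x/2)-1)) := mul_pos hsp hK
  have h4 : s*(x/2*(Real.exp (x/2)+1) - 2*(Real.exp (x/2)-1))
      = x/2*(s*Real.exp (x/2) + s) - 2*(s*Real.exp (x/2) - s) := by ring
  rw [h4, hsE] at h3
  have h5 : 0 < x/2*(1+s) - 2*(1-s) := by linarith
  rw [hE]
  nlinarith [mul_pos (sub_pos.2 hs1) h5]

end AuxForNoiselessError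

/-- **Large-ensemble asymptotics of the noiseless error (Eq. HS_approx(b)).**
For fixed `t > 0`, `J² f(t,J)` converges as `J → ∞` to
`M³t/(16ηg² h(Mt))` with `h(x) = −(4+x)e^{−x} + 8e^{−x/2} + x − 4`, and
`t³ · M³t/(16ηg² h(Mt)) → 3/(ηMg²)` as `t → 0⁺`. -/
theorem noiseless_error_large_ensemble_asymptotics
    (M η g t : ℝ) (hM : 0 < M) (hη : 0 < η) (hg : 0 < g) (ht : 0 < t)
    (f : ℝ → ℝ → ℝ)
    (hf : ∀ t > (0 : ℝ), ∀ J > (0 : ℝ), f t J =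
      M ^ 2 * (1 + 2 * J * M * t * η) /
        (16 * η * g ^ 2 * J ^ 2 *
          (-(1 + 2 * η * J * (4 + M * t)) * Real.exp (-M * t) +
            4 * (1 + 4 * J * η) * Real.exp (-M * t / 2) +
            ((M * t - 3) + 2 * η * J * (M * t - 4)))) )
    (h : ℝ → ℝ)
    (hh : ∀ x : ℝ, h x = -(4 + x) * Real.exp (-x) + 8 * Real.exp (-x / 2) + x - 4) :
    Tendsto (fun J : ℝ => J ^ 2 * f t J) atTop
      (nhds (M ^ 3 * t / (16 * η * g ^ 2 * h (M * t)))) ∧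
    Tendsto (fun s : ℝ => s ^ 3 * (M ^ 3 * s / (16 * η * g ^ 2 * h (M * s))))
      (nhdsWithin 0 (Set.Ioi 0)) (nhds (3 / (η * M * g ^ 2))) := by
  have hhF : ∀ x : ℝ, h x = Faux (-4) (-1) 8 (-4) 1 x := by
    intro x; rw [hh]; simp only [Faux]; ring
  have hpos : ∀ x : ℝ, 0 < x → 0 < h x := by
    intro x hx; rw [hh]; exact aux_pos x hx
  have hx0 : 0 < M * t := mul_pos hM ht
  set H := h (M * t) with hHdef
  have hHpos : 0 < H := hpos _ hx0
  set A := -Real.exp (-(M*t)) + 4*Real.exp (-(M*t)/2) + (M*t) - 3 with hAdef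
  have hdec : ∀ J : ℝ,
      (-(1 + 2 * η * J * (4 + M * t)) * Real.exp (-M * t) +
        4 * (1 + 4 * J * η) * Real.exp (-M * t / 2) +
        ((M * t - 3) + 2 * η * J * (M * t - 4))) = A + 2*η*J*H := by
    intro J
    rw [hAdef, hHdef, hh]
    simp only [neg_mul]
    ring
  clear_value A H
  constructor
  · have evJ : ∀ᶠ J : ℝ in atTop,
        J^2 * f t J = (M^2/J + 2*M^3*t*η) / (16*η*g^2*(A/J + 2*η*H)) := by
      filter_upwards [eventually_gt_atTop (0:ℝ), eventually_gt_atTop (|A|/(2*η*H))]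
        with J hJ0 hJA
      have h2 : |A| < J * (2*η*H) := (div_lt_iff₀ (by positivity)).mp hJA
      have h3 := neg_abs_le A
      have hD : 0 < A + 2*η*J*H := by nlinarith
      have hJne : J ≠ 0 := ne_of_gt hJ0
      have hDne : A + 2*η*J*H ≠ 0 := ne_of_gt hD
      have hηne : η ≠ 0 := ne_of_gt hη
      have hgne : g ≠ 0 := ne_of_gt hg
      have hD2 : A/J + 2*η*H ≠ 0 := by
        have e : A/J + 2*η*H = (A + 2*η*J*H)/J := by
          field_simp [hJne]
        rw [e]
        exact div_ne_zero hDne hJne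
      have eN : M^2/J + 2*M^3*t*η = (M^2*(1 + 2*J*M*t*η))/J := by
        field_simp [hJne]
      have eD : A/J + 2*η*H = (A + 2*η*J*H)/J := by
        field_simp [hJne]
      have gen : ∀ N D c : ℝ, D ≠ 0 → c ≠ 0 →
          J^2 * (N/(c*J^2*D)) = (N/J)/(c*(D/J)) := by
        intro N D c hDn hcn
        field_simp [hJne]
      rw [hf t ht J hJ0, hdec J, eN, eD]
      exact gen _ _ _ hDne (by positivity)
    have num_t : Tendsto (fun J : ℝ => M^2/J + 2*M^3*t*η) atTop (nhds (2*M^3*t*η)) := by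
      have h1 := Tendsto.div_atTop (l := atTop) (tendsto_const_nhds (x := M^2)) tendsto_id
      simpa using h1.add (tendsto_const_nhds (x := 2*M^3*t*η))
    have den_t : Tendsto (fun J : ℝ => 16*η*g^2*(A/J + 2*η*H)) atTop
        (nhds (16*η*g^2*(2*η*H))) := by
      have h1 := Tendsto.div_atTop (l := atTop) (tendsto_const_nhds (x := A)) tendsto_id
      have h2 := (h1.add (tendsto_const_nhds (x := 2*η*H))).const_mul (16*η*g^2)
      simpa using h2
    have hdenne : 16*η*g^2*(2*η*H) ≠ 0 := by positivity
    have lim := num_t.div den_t hdenne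
    have hval : 2*M^3*t*η / (16*η*g^2*(2*η*H)) = M^3*t/(16*η*g^2*H) := by
      rw [div_eq_div_iff (by positivity) (by positivity)]
      ring
    rw [hval] at lim
    exact lim.congr' (evJ.mono fun J hJ => hJ.symm)
  · have hT : Tendsto (fun x : ℝ => x^4 / Faux (-4) (-1) 8 (-4) 1 x)
        (nhdsWithin 0 (Set.Ioi 0)) (nhds 48) := by
      have h1 := F0_lim.inv₀ (by norm_num)
      simp only [inv_div] at h1
      norm_num at h1
      exact h1
    have hms : Tendsto (fun s : ℝ => M * s) (nhdsWithin 0 (Set.Ioi 0))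
        (nhdsWithin 0 (Set.Ioi 0)) := by
      apply tendsto_nhdsWithin_of_tendsto_nhds_of_eventually_within
      · have hc : Continuous (fun s : ℝ => M * s) := by fun_prop
        simpa using (hc.tendsto 0).mono_left (nhdsWithin_le_nhds (s := Set.Ioi 0))
      · filter_upwards [self_mem_nhdsWithin] with s hs
        exact mul_pos hM hs
    have hcomp := (hT.comp hms).const_mul (1/(16*η*g^2*M))
    have ev2 : ∀ᶠ s : ℝ in nhdsWithin 0 (Set.Ioi 0),
        (1/(16*η*g^2*M)) * ((M*s)^4 / Faux (-4) (-1) 8 (-4) 1 (M*s))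
          = s^3 * (M^3*s/(16*η*g^2*h (M*s))) := by
      filter_upwards [self_mem_nhdsWithin] with s hs
      have hsp : (0:ℝ) < s := hs
      have hFpos : 0 < Faux (-4) (-1) 8 (-4) 1 (M*s) := by
        rw [← hhF]; exact hpos _ (mul_pos hM hsp)
      rw [hhF (M*s)]
      have hFne : Faux (-4) (-1) 8 (-4) 1 (M*s) ≠ 0 := ne_of_gt hFpos
      field_simp
    have lim2 := hcomp.congr' ev2
    have hval2 : (1/(16*η*g^2*M)) * 48 = 3/(η*M*g^2) := by
      rw [div_mul_eq_mul_div, one_mul, div_eq_div_iff (by positivity) (by positivity)]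
      ring
    rwa [hval2] at lim2
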